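/- Let X be a T1 topological space such that every point has an open neighborhood which is completely regular in the subspace topology. Then X is completely regular if and only if X is regular. -/

import Mathlib

open Set Topology Filter unitInterval

/-- A `T₁` space in which every point has a completely regular open neighborhood is
completely regular iff it is regular. -/
theorem stmt1 (X : Type*) [TopologicalSpace X] [T1Space X]
    (h : ∀ x : X, ∃ U : Set X, IsOpen U ∧ x ∈ U ∧ CompletelyRegularSpace U) :
    CompletelyRegularSpace X ↔ RegularSpace X := by
  constructor
  · intro _; exact CompletelyRegularSpace.instRegularSpace
  · intro hreg
    constructor
    intro x K hK hxK
    obtain ⟨U, hUopen, hxU, hUcr⟩ := h x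
    have hmem : U ∩ Kᶜ ∈ 𝓝 x :=
      Filter.inter_mem (hUopen.mem_nhds hxU) (hK.isOpen_compl.mem_nhds hxK)
    obtain ⟨t, htmem, htclosed, htsub⟩ := exists_mem_nhds_isClosed_subset hmem
    set V : Set X := interior t with hV
    have hxV : x ∈ V := mem_interior_iff_mem_nhds.mpr htmem
    -- the closed set `U \ V` in the subspace `U`
    have hScl : IsClosed (Subtype.val ⁻¹' Vᶜ : Set U) :=
      (isOpen_interior.preimage continuous_subtype_val).isClosed_compl
    obtain ⟨g, hgc, hgx, hgS⟩ := hUcr.completely_regular ⟨x, hxU⟩ _ hScl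
      (by simpa using hxV)
    classical
    set f : X → I := fun y => if hy : y ∈ U then g ⟨y, hy⟩ else 1 with hf
    have hf_eq_one : ∀ y ∉ t, f y = 1 := by
      intro y hyt
      by_cases hyU : y ∈ U
      · have : (⟨y, hyU⟩ : U) ∈ (Subtype.val ⁻¹' Vᶜ : Set U) := by
          simp only [mem_preimage, mem_compl_iff]
          exact fun hyV => hyt (interior_subset hyV)
        simp [hf, hyU, hgS this]
      · simp [hf, hyU]
    have hcont : Continuous f := by
      rw [continuous_iff_continuousAt]
      intro y
      by_cases hyU : y ∈ U
      · have hres : ContinuousOn f U := by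
          rw [continuousOn_iff_continuous_restrict]
          have : U.domRestrict f = g := by
            funext u; simp [hf, u.2]
          rw [this]; exact hgc
        exact hres.continuousAt (hUopen.mem_nhds hyU)
      · have hyt : y ∈ tᶜ := fun hyt => hyU (htsub hyt).1
        have : f =ᶠ[𝓝 y] fun _ => 1 := by
          filter_upwards [htclosed.isOpen_compl.mem_nhds hyt] with z hz
          exact hf_eq_one z hz
        exact ContinuousAt.congr (continuousAt_const) this.symm
      -- done
    refine ⟨f, hcont, ?_, ?_⟩
    · simp [hf, hxU, hgx]
    · intro y hyK
      have : y ∉ t := fun hyt => (htsub hyt).2 hyK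
      exact hf_eq_one y this
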